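/- Let Γ be a finite simple graph and let W be a set of vertices inducing a complete subgraph (a clique). Then the edge set of the induced subgraph Γ[W] is a modular flat of the graphic matroid M(Γ). -/

import Mathlib

open scoped Classical

namespace Paper

/-- `M` is the graphic matroid of the simple graph `Γ`: its ground set is the edge set of
`Γ` and its independent sets are precisely the edge sets of forests. -/
def IsGraphicMatroidOf {V : Type*} (Γ : SimpleGraph V) (M : Matroid (Sym2 V)) : Prop :=
  M.E = Γ.edgeSet ∧
    ∀ I : Set (Sym2 V), M.Indep I ↔ I ⊆ Γ.edgeSet ∧ (SimpleGraph.fromEdgeSet I).IsAcyclic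

noncomputable def mrk {β : Type*} (M : Matroid β) (X : Set β) : ℕ :=
  sSup {n | ∃ I, M.Indep I ∧ I ⊆ X ∧ I.ncard = n}

def ModularFlat {β : Type*} (M : Matroid β) (X : Set β) : Prop :=
  M.IsFlat X ∧ ∀ Y, M.IsFlat Y →
    mrk M X + mrk M Y = mrk M (X ∩ Y) + mrk M (M.closure (X ∪ Y))

def Round {β : Type*} (M : Matroid β) : Prop :=
  ¬ ∃ F₁ F₂ : Set β, M.IsFlat F₁ ∧ M.IsFlat F₂ ∧ F₁ ≠ M.E ∧ F₂ ≠ M.E ∧ M.E = F₁ ∪ F₂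

/-! ### Auxiliary graph lemmas -/

open SimpleGraph Set

section Graph

variable {V : Type*}

/-- Transfer reachability along a map sending adjacency to reachability. -/
lemma reachable_transfer {G H : SimpleGraph V} (h : ∀ x y, G.Adj x y → H.Reachable x y)
    {a b : V} (hr : G.Reachable a b) : H.Reachable a b := by
  obtain ⟨w⟩ := hr
  induction w with
  | nil => exact Reachable.refl _
  | cons h' p ih => exact (h _ _ h').trans ih

/-- If the endpoints of `s(u,v)` are not joined in the forest `I`, inserting the edge keeps
it a forest. -/
lemma insert_acyclic {I : Set (Sym2 V)} {u v : V}
    (hI : (fromEdgeSet I).IsAcyclic) (huv : u ≠ v)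
    (h : ¬ (fromEdgeSet I).Reachable u v) :
    (fromEdgeSet (insert s(u, v) I)).IsAcyclic := by
  have heI : s(u, v) ∉ I := fun hmem => h ((fromEdgeSet_adj _).mpr ⟨hmem, huv⟩).reachable
  intro x c hc
  by_cases he : s(u, v) ∈ c.edges
  · have h2 := (adj_and_reachable_delete_edges_iff_exists_cycle.mpr ⟨x, c, hc, he⟩).2
    refine h (h2.mono ?_)
    intro a b hab
    rw [deleteEdges_adj] at hab
    obtain ⟨hab1, hab2⟩ := hab
    rw [fromEdgeSet_adj] at hab1 ⊢
    refine ⟨?_, hab1.2⟩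
    rcases Set.mem_insert_iff.mp hab1.1 with h' | h'
    · exact absurd (Set.mem_singleton_iff.mpr h') hab2
    · exact h'
  · have hs : ∀ f ∈ c.edges, f ∈ (fromEdgeSet I).edgeSet := by
      intro f hf
      have h3 := c.edges_subset_edgeSet hf
      rw [edgeSet_fromEdgeSet] at h3 ⊢
      refine ⟨?_, h3.2⟩
      rcases Set.mem_insert_iff.mp h3.1 with h' | h'
      · exact absurd (h' ▸ hf) he
      · exact h'
    exact hI (c.transfer _ hs) (hc.transfer hs)

/-- Inserting an edge between joined endpoints creates a cycle. -/
lemma insert_not_acyclic {I : Set (Sym2 V)} {u v : V}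
    (h : (fromEdgeSet I).Reachable u v) (huv : u ≠ v) (he : s(u, v) ∉ I) :
    ¬ (fromEdgeSet (insert s(u, v) I)).IsAcyclic := by
  intro hac
  have hadj : (fromEdgeSet (insert s(u, v) I)).Adj u v :=
    (fromEdgeSet_adj _).mpr ⟨Set.mem_insert _ _, huv⟩
  have hbr := isAcyclic_iff_forall_adj_isBridge.mp hac hadj
  rw [isBridge_iff] at hbr
  refine hbr (h.mono ?_)
  intro a b hab
  rw [fromEdgeSet_adj] at hab
  rw [deleteEdges_adj, fromEdgeSet_adj]
  exact ⟨⟨Or.inr hab.1, hab.2⟩, fun hc => he (Set.mem_singleton_iff.mp hc ▸ hab.1)⟩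

/-- Reachability after inserting one edge. -/
lemma reachable_insert_iff {I : Set (Sym2 V)} {u v : V} (huv : u ≠ v) {a b : V}
    (hr : (fromEdgeSet (insert s(u, v) I)).Reachable a b) :
    (fromEdgeSet I).Reachable a b ∨
      ((fromEdgeSet I).Reachable a u ∧ (fromEdgeSet I).Reachable v b) ∨
      ((fromEdgeSet I).Reachable a v ∧ (fromEdgeSet I).Reachable u b) := by
  obtain ⟨w⟩ := hr
  induction w with
  | nil => exact Or.inl (Reachable.refl _)
  | @cons x y z h p ih =>
    rw [fromEdgeSet_adj] at h
    rcases Set.mem_insert_iff.mp h.1 with h1 | h1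
    · rcases Sym2.eq_iff.mp h1 with ⟨rfl, rfl⟩ | ⟨rfl, rfl⟩
      · rcases ih with h2 | ⟨h2, h3⟩ | ⟨h2, h3⟩
        · exact Or.inr (Or.inl ⟨Reachable.refl _, h2⟩)
        · exact Or.inl (h2.symm.trans h3)
        · exact Or.inl h3
      · rcases ih with h2 | ⟨h2, h3⟩ | ⟨h2, h3⟩
        · exact Or.inr (Or.inr ⟨Reachable.refl _, h2⟩)
        · exact Or.inl h3
        · exact Or.inl (h2.symm.trans h3)
    · have hxy : (fromEdgeSet I).Reachable x y :=
        ((fromEdgeSet_adj _).mpr ⟨h1, h.2⟩).reachable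
      rcases ih with h2 | ⟨h2, h3⟩ | ⟨h2, h3⟩
      · exact Or.inl (hxy.trans h2)
      · exact Or.inr (Or.inl ⟨hxy.trans h2, h3⟩)
      · exact Or.inr (Or.inr ⟨hxy.trans h2, h3⟩)

/-- Adding a star from `w0` to pairwise-unreachable tips keeps the graph a forest, and does
not change the components of untouched tips. -/
lemma star_good {J : Set (Sym2 V)} (hJac : (fromEdgeSet J).IsAcyclic) (w0 : V)
    {S : Set V} (hS : S.Finite) :
    (∀ t ∈ S, ¬ (fromEdgeSet J).Reachable w0 t) →
    (∀ t ∈ S, ∀ t' ∈ S, t ≠ t' → ¬ (fromEdgeSet J).Reachable t t') →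
    (fromEdgeSet (J ∪ (fun t => s(w0, t)) '' S)).IsAcyclic ∧
      (∀ z t : V, ¬ (fromEdgeSet J).Reachable w0 t →
        (∀ s ∈ S, ¬ (fromEdgeSet J).Reachable s t) →
        (fromEdgeSet (J ∪ (fun t => s(w0, t)) '' S)).Reachable z t →
        (fromEdgeSet J).Reachable z t) := by
  refine Set.Finite.induction_on (motive := fun S _ => (∀ t ∈ S, ¬ (fromEdgeSet J).Reachable w0 t) →
    (∀ t ∈ S, ∀ t' ∈ S, t ≠ t' → ¬ (fromEdgeSet J).Reachable t t') →
    (fromEdgeSet (J ∪ (fun t => s(w0, t)) '' S)).IsAcyclic ∧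
      (∀ z t : V, ¬ (fromEdgeSet J).Reachable w0 t →
        (∀ s ∈ S, ¬ (fromEdgeSet J).Reachable s t) →
        (fromEdgeSet (J ∪ (fun t => s(w0, t)) '' S)).Reachable z t →
        (fromEdgeSet J).Reachable z t)) S hS ?_ ?_
  · intro _ _
    simp only [image_empty, union_empty]
    exact ⟨hJac, fun z t _ _ h => h⟩
  · intro a S haS hSfin ih hw0 hpair
    have hw0S : ∀ t ∈ S, ¬ (fromEdgeSet J).Reachable w0 t :=
      fun t ht => hw0 t (Set.mem_insert_of_mem _ ht)
    have hpairS : ∀ t ∈ S, ∀ t' ∈ S, t ≠ t' → ¬ (fromEdgeSet J).Reachable t t' :=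
      fun t ht t' ht' => hpair t (Set.mem_insert_of_mem _ ht) t' (Set.mem_insert_of_mem _ ht')
    obtain ⟨ihac, ihreach⟩ := ih hw0S hpairS
    have hw0a : ¬ (fromEdgeSet J).Reachable w0 a := hw0 a (Set.mem_insert _ _)
    have hw0a' : w0 ≠ a := fun h => hw0a (h ▸ Reachable.refl _)
    have hSa : ∀ s ∈ S, ¬ (fromEdgeSet J).Reachable s a := fun s hs =>
      hpair s (Set.mem_insert_of_mem _ hs) a (Set.mem_insert _ _) (fun h => haS (h ▸ hs))
    have hnr : ¬ (fromEdgeSet (J ∪ (fun t => s(w0, t)) '' S)).Reachable w0 a :=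
      fun h => hw0a (ihreach w0 a hw0a hSa h)
    have hrw : J ∪ (fun t => s(w0, t)) '' (insert a S) =
        insert s(w0, a) (J ∪ (fun t => s(w0, t)) '' S) := by
      rw [Set.image_insert_eq, Set.union_insert]
    rw [hrw]
    constructor
    · exact insert_acyclic ihac hw0a' hnr
    · intro z t hzt hins hreach
      have hSt : ∀ s ∈ S, ¬ (fromEdgeSet J).Reachable s t :=
        fun s hs => hins s (Set.mem_insert_of_mem _ hs)
      rcases reachable_insert_iff hw0a' hreach with h1 | ⟨h1, h2⟩ | ⟨h1, h2⟩
      · exact ihreach z t hzt hSt h1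
      · exact absurd (ihreach a t hzt hSt h2) (hins a (Set.mem_insert _ _))
      · exact absurd (ihreach w0 t hzt hSt h2) hzt

end Graph

/-! ### Rank lemmas for `mrk` -/

section Rank

variable {β : Type*} {M : Matroid β}

lemma mrk_bddAbove (hfin : M.E.Finite) (X : Set β) :
    BddAbove {n | ∃ I, M.Indep I ∧ I ⊆ X ∧ I.ncard = n} := by
  refine ⟨M.E.ncard, fun n hn => ?_⟩
  obtain ⟨I, hI, _, rfl⟩ := hn
  exact Set.ncard_le_ncard hI.subset_ground hfin

lemma ncard_le_mrk (hfin : M.E.Finite) {I X : Set β} (hI : M.Indep I) (hIX : I ⊆ X) :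
    I.ncard ≤ mrk M X :=
  le_csSup (mrk_bddAbove hfin X) ⟨I, hI, hIX, rfl⟩

lemma mrk_le {X : Set β} {n : ℕ}
    (h : ∀ I, M.Indep I → I ⊆ X → I.ncard ≤ n) : mrk M X ≤ n := by
  refine csSup_le ⟨0, ∅, M.empty_indep, Set.empty_subset _, by simp⟩ ?_
  rintro m ⟨I, hI, hIX, rfl⟩
  exact h I hI hIX

lemma Basis'_mrk (hfin : M.E.Finite) {B X : Set β} (hB : M.IsBasis' B X) :
    mrk M X = B.ncard := by
  refine le_antisymm (mrk_le fun I hI hIX => ?_) (ncard_le_mrk hfin hB.indep hB.subset)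
  obtain ⟨J, hJ, hIJ⟩ := hI.subset_isBasis'_of_subset hIX
  have h1 : I.ncard ≤ J.ncard :=
    Set.ncard_le_ncard hIJ (hfin.subset hJ.indep.subset_ground)
  have h2 : J.encard = B.encard := hJ.encard_eq_encard hB
  have h3 : J.ncard = B.ncard := by rw [Set.ncard_def, h2, ← Set.ncard_def]
  omega

lemma mrk_mono (hfin : M.E.Finite) {X Y : Set β} (h : X ⊆ Y) : mrk M X ≤ mrk M Y := by
  obtain ⟨B, hB⟩ := M.exists_isBasis' X
  rw [Basis'_mrk hfin hB]
  exact ncard_le_mrk hfin hB.indep (hB.subset.trans h)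

lemma mrk_closure_eq (hfin : M.E.Finite) (X : Set β) : mrk M (M.closure X) = mrk M X := by
  obtain ⟨B, hB⟩ := M.exists_isBasis' X
  rw [Basis'_mrk hfin hB, Basis'_mrk hfin hB.isBasis_closure_right.isBasis']

lemma mrk_indep (hfin : M.E.Finite) {I : Set β} (hI : M.Indep I) : mrk M I = I.ncard :=
  Basis'_mrk hfin hI.isBasis_self.isBasis'

lemma mrk_le_ncard (hfin : M.E.Finite) {X : Set β} (hX : X.Finite) : mrk M X ≤ X.ncard := by
  obtain ⟨B, hB⟩ := M.exists_isBasis' X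
  rw [Basis'_mrk hfin hB]
  exact Set.ncard_le_ncard hB.subset hX

/-- The submodular-inequality direction, valid in every (finite) matroid. -/
lemma mrk_submod (hfin : M.E.Finite) (X Y : Set β) :
    mrk M (X ∩ Y) + mrk M (M.closure (X ∪ Y)) ≤ mrk M X + mrk M Y := by
  obtain ⟨I, hI⟩ := M.exists_isBasis' (X ∩ Y)
  obtain ⟨J, hJ, hIJ⟩ := hI.indep.subset_isBasis'_of_subset
    (hI.subset.trans Set.inter_subset_right)
  obtain ⟨K, hK, hJK⟩ := hJ.indep.subset_isBasis'_of_subset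
    (hJ.subset.trans Set.subset_union_right)
  have hKfin : K.Finite := hfin.subset hK.indep.subset_ground
  have hJfin : J.Finite := hKfin.subset hJK
  rw [mrk_closure_eq hfin, Basis'_mrk hfin hI, Basis'_mrk hfin hJ, Basis'_mrk hfin hK]
  have hIDindep : M.Indep (I ∪ (K \ J)) :=
    hK.indep.subset (Set.union_subset (hIJ.trans hJK) Set.diff_subset)
  have hIDsub : I ∪ (K \ J) ⊆ X := by
    refine Set.union_subset (hI.subset.trans Set.inter_subset_left) ?_
    rintro d ⟨hdK, hdJ⟩
    rcases hK.subset hdK with hdX | hdY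
    · exact hdX
    · exact absurd (hJ.mem_of_insert_indep hdY
        (hK.indep.subset (Set.insert_subset hdK hJK))) hdJ
  have h1 : (I ∪ (K \ J)).ncard ≤ mrk M X := ncard_le_mrk hfin hIDindep hIDsub
  have hdisj : Disjoint I (K \ J) :=
    Set.disjoint_of_subset_left hIJ Set.disjoint_sdiff_right
  have h2 : (I ∪ (K \ J)).ncard = I.ncard + (K \ J).ncard :=
    Set.ncard_union_eq hdisj (hJfin.subset hIJ) (hKfin.subset Set.diff_subset)
  have h3 : (K \ J).ncard + J.ncard = K.ncard :=
    Set.ncard_diff_add_ncard_of_subset hJK hKfin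
  omega

end Rank

/-! ### Bridges between graph reachability and matroid closure -/

section Bridge

variable {V : Type*} {Γ : SimpleGraph V} {M : Matroid (Sym2 V)}

lemma reachable_of_mem_closure (hM : IsGraphicMatroidOf Γ M) {B : Set (Sym2 V)}
    (hB : M.Indep B) {u v : V} (huv : u ≠ v) (he : s(u, v) ∈ M.closure B) :
    (fromEdgeSet B).Reachable u v := by
  obtain ⟨hBE, hBac⟩ := (hM.2 B).mp hB
  by_cases hmem : s(u, v) ∈ B
  · exact ((fromEdgeSet_adj _).mpr ⟨hmem, huv⟩).reachable
  by_contra hr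
  have heE : s(u, v) ∈ Γ.edgeSet := hM.1 ▸ M.closure_subset_ground B he
  have hins : M.Indep (insert s(u, v) B) := (hM.2 _).mpr
    ⟨Set.insert_subset heE hBE, insert_acyclic hBac huv hr⟩
  exact hmem ((hB.mem_closure_iff'.mp he).2 hins)

lemma mem_closure_of_reachable (hM : IsGraphicMatroidOf Γ M) {S : Set (Sym2 V)}
    (hSE : S ⊆ Γ.edgeSet) {u v : V} (he : s(u, v) ∈ Γ.edgeSet)
    (hr : (fromEdgeSet S).Reachable u v) : s(u, v) ∈ M.closure S := by
  have huv : u ≠ v := ((SimpleGraph.mem_edgeSet _).mp he).ne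
  obtain ⟨B, hB⟩ := M.exists_isBasis' S
  obtain ⟨hBE, hBac⟩ := (hM.2 B).mp hB.indep
  have step : ∀ x y, (fromEdgeSet S).Adj x y → (fromEdgeSet B).Reachable x y := by
    intro x y hxy
    rw [fromEdgeSet_adj] at hxy
    by_cases hxB : s(x, y) ∈ B
    · exact ((fromEdgeSet_adj _).mpr ⟨hxB, hxy.2⟩).reachable
    by_contra hre
    have hins : M.Indep (insert s(x, y) B) := (hM.2 _).mpr
      ⟨Set.insert_subset (hSE hxy.1) hBE, insert_acyclic hBac hxy.2 hre⟩
    exact hxB (hB.mem_of_insert_indep hxy.1 hins)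
  have hruv := reachable_transfer step hr
  rw [← hB.closure_eq_closure]
  by_cases hmem : s(u, v) ∈ B
  · exact M.subset_closure B hB.indep.subset_ground hmem
  · rw [hB.indep.mem_closure_iff_of_notMem hmem, Matroid.dep_iff]
    constructor
    · intro hind
      exact insert_not_acyclic hruv huv hmem ((hM.2 _).mp hind).2
    · rw [hM.1]
      exact Set.insert_subset he hBE

end Bridge

/-- The edge set of the subgraph induced by a clique is a modular flat of the graphic
matroid. -/
theorem stmt15 {V : Type*} [Fintype V] (Γ : SimpleGraph V)
    (M : Matroid (Sym2 V)) (hM : IsGraphicMatroidOf Γ M)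
    {W : Set V} (hW : Γ.IsClique W) :
    ModularFlat M {e ∈ Γ.edgeSet | ∀ v ∈ e, v ∈ W} := by
  classical
  set X : Set (Sym2 V) := {e ∈ Γ.edgeSet | ∀ v ∈ e, v ∈ W} with hXdef
  have hXE : X ⊆ Γ.edgeSet := fun e he => he.1
  have hXE' : X ⊆ M.E := by rw [hM.1]; exact hXE
  have hfin : M.E.Finite := by rw [hM.1]; exact Set.toFinite _
  -- X is a flat
  have hclX : M.closure X ⊆ X := by
    obtain ⟨B, hB⟩ := M.exists_isBasis' X
    have hBX : B ⊆ X := hB.subset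
    intro e
    refine Sym2.ind (fun u v he => ?_) e
    have heE : s(u, v) ∈ Γ.edgeSet := hM.1 ▸ M.closure_subset_ground X he
    have huv : u ≠ v := ((SimpleGraph.mem_edgeSet _).mp heE).ne
    rw [← hB.closure_eq_closure] at he
    have hr := reachable_of_mem_closure hM hB.indep huv he
    have hmemW : ∀ x y : V, x ≠ y → (fromEdgeSet B).Reachable x y → x ∈ W := by
      intro x y hxy hxyr
      obtain ⟨w⟩ := hxyr
      cases w with
      | nil => exact absurd rfl hxy
      | cons h p =>
        rw [fromEdgeSet_adj] at h
        exact (hBX h.1).2 x (Sym2.mem_mk_left _ _)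
    refine ⟨heE, ?_⟩
    intro z hz
    rcases Sym2.mem_iff.mp hz with rfl | rfl
    · exact hmemW _ _ huv hr
    · exact hmemW _ _ (Ne.symm huv) hr.symm
  have hXflat : M.IsFlat X := by
    constructor
    · intro I Xs hIX hIXs
      have h1 : Xs ⊆ M.closure I := hIXs.subset_closure
      rw [hIX.closure_eq_closure] at h1
      exact h1.trans hclX
    · exact hXE'
  refine ⟨hXflat, fun Y hY => ?_⟩
  refine le_antisymm ?_ (mrk_submod hfin X Y)
  by_cases hXemp : X = ∅
  · rw [hXemp, Set.empty_inter, Set.empty_union, hY.closure,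
      mrk_indep hfin M.empty_indep, Set.ncard_empty]
  -- Main case: pick a vertex of the clique
  obtain ⟨e0, he0⟩ := Set.nonempty_iff_ne_empty.mpr hXemp
  obtain ⟨w0, hw0W⟩ : ∃ w0, w0 ∈ W := by
    revert he0
    refine Sym2.ind (fun a b he0 => ?_) e0
    exact ⟨a, he0.2 a (Sym2.mem_mk_left _ _)⟩
  -- a basis of the flat Y
  obtain ⟨J, hJ⟩ := M.exists_isBasis' Y
  have hYE : Y ⊆ M.E := hY.subset_ground
  have hJY : J ⊆ Y := hJ.subset
  obtain ⟨hJE, hJac⟩ := (hM.2 J).mp hJ.indep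
  -- components and representatives
  set K : SimpleGraph V := fromEdgeSet J with hKdef
  set φ : V → K.ConnectedComponent := K.connectedComponentMk with hφdef
  set C : Set K.ConnectedComponent := (φ '' W) \ {φ w0} with hCdef
  set g : K.ConnectedComponent → V :=
    fun q => if h : ∃ w, w ∈ W ∧ φ w = q then Exists.choose h else w0 with hgdef
  have hg : ∀ q, (∃ w, w ∈ W ∧ φ w = q) → g q ∈ W ∧ φ (g q) = q := by
    intro q hq
    rw [hgdef]
    simp only [dif_pos hq]
    exact hq.choose_spec
  set T : Set V := g '' C with hTdef
  have hTprop : ∀ t ∈ T, t ∈ W ∧ φ t ≠ φ w0 := by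
    rintro t ⟨q, hq, rfl⟩
    obtain ⟨hq1, hq2⟩ := hq
    obtain ⟨hgW, hgφ⟩ := hg q (by obtain ⟨w, hw, hwq⟩ := hq1; exact ⟨w, hw, hwq⟩)
    exact ⟨hgW, by rw [hgφ]; exact fun h => hq2 (Set.mem_singleton_iff.mpr h.symm ▸ rfl)⟩
  have htip : ∀ t ∈ T, ¬ K.Reachable w0 t := by
    intro t ht hr
    exact (hTprop t ht).2 (ConnectedComponent.sound hr.symm)
  have hpair : ∀ t ∈ T, ∀ t' ∈ T, t ≠ t' → ¬ K.Reachable t t' := by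
    rintro t ⟨q, hq, rfl⟩ t' ⟨q', hq', rfl⟩ hne hr
    obtain ⟨-, h1⟩ := hg q (by obtain ⟨w, hw, hwq⟩ := hq.1; exact ⟨w, hw, hwq⟩)
    obtain ⟨-, h2⟩ := hg q' (by obtain ⟨w, hw, hwq⟩ := hq'.1; exact ⟨w, hw, hwq⟩)
    have : q = q' := by rw [← h1, ← h2]; exact ConnectedComponent.sound hr
    exact hne (by rw [this])
  have hcov : ∀ w ∈ W, K.Reachable w w0 ∨ ∃ t ∈ T, K.Reachable w t := by
    intro w hw
    by_cases h : φ w = φ w0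
    · exact Or.inl (ConnectedComponent.exact h)
    · right
      obtain ⟨hgW, hgφ⟩ := hg (φ w) ⟨w, hw, rfl⟩
      refine ⟨g (φ w), ⟨φ w, ⟨⟨w, hw, rfl⟩, h⟩, rfl⟩, ?_⟩
      exact ConnectedComponent.exact (hgφ.symm)
  have hTW : ∀ t ∈ T, t ∈ W := fun t ht => (hTprop t ht).1
  have hTne : ∀ t ∈ T, t ≠ w0 := fun t ht h =>
    htip t ht (h ▸ Reachable.refl _)
  have hTfin : T.Finite := Set.toFinite _
  -- the star A
  set A : Set (Sym2 V) := (fun t => s(w0, t)) '' T with hAdef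
  obtain ⟨hJAac, -⟩ := star_good hJac w0 hTfin htip hpair
  have hAE : A ⊆ Γ.edgeSet := by
    rintro e ⟨t, ht, rfl⟩
    exact (SimpleGraph.mem_edgeSet _).mpr (hW hw0W (hTW t ht) (Ne.symm (hTne t ht)))
  have hAX : A ⊆ X := by
    rintro e ⟨t, ht, rfl⟩
    refine ⟨hAE ⟨t, ht, rfl⟩, ?_⟩
    intro z hz
    rcases Sym2.mem_iff.mp hz with rfl | rfl
    · exact hw0W
    · exact hTW _ ht
  have hJAindep : M.Indep (J ∪ A) := (hM.2 _).mpr ⟨Set.union_subset hJE hAE, hJAac⟩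
  have hdisjJA : Disjoint J A := by
    rw [Set.disjoint_right]
    rintro e ⟨t, ht, rfl⟩ heJ
    exact htip t ht ((fromEdgeSet_adj _).mpr ⟨heJ, Ne.symm (hTne t ht)⟩).reachable
  -- a basis of X ∩ Y
  obtain ⟨B, hB⟩ := M.exists_isBasis' (X ∩ Y)
  obtain ⟨hBE, hBac⟩ := (hM.2 B).mp hB.indep
  -- edges of the clique within a `J`-component lie in the closure of `B`
  have hsame : ∀ x ∈ W, ∀ y ∈ W, x ≠ y → K.Reachable x y →
      (fromEdgeSet B).Reachable x y := by
    intro x hx y hy hxy hr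
    have hxyE : s(x, y) ∈ Γ.edgeSet := (SimpleGraph.mem_edgeSet _).mpr (hW hx hy hxy)
    have h1 : s(x, y) ∈ Y := by
      have h2 := mem_closure_of_reachable hM hJE hxyE hr
      rwa [hJ.closure_eq_closure, hY.closure] at h2
    have h2 : s(x, y) ∈ M.closure B := by
      rw [hB.closure_eq_closure]
      refine M.subset_closure (X ∩ Y) (fun z hz => hXE' hz.1) ?_
      refine ⟨⟨hxyE, ?_⟩, h1⟩
      intro z hz
      rcases Sym2.mem_iff.mp hz with rfl | rfl
      exacts [hx, hy]
    exact reachable_of_mem_closure hM hB.indep hxy h2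
  -- every clique vertex reaches `w0` in `fromEdgeSet (B ∪ A)`
  have key : ∀ w ∈ W, (fromEdgeSet (B ∪ A)).Reachable w w0 := by
    intro w hw
    have hmono : fromEdgeSet B ≤ fromEdgeSet (B ∪ A) :=
      fromEdgeSet_mono Set.subset_union_left
    rcases hcov w hw with h | ⟨t, htT, hwt⟩
    · by_cases hwx : w = w0
      · exact hwx ▸ Reachable.refl _
      · exact (hsame w hw w0 hw0W hwx h).mono hmono
    · have hadj : (fromEdgeSet (B ∪ A)).Adj t w0 := by
        refine (fromEdgeSet_adj _).mpr ⟨?_, hTne t htT⟩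
        rw [Sym2.eq_swap]
        exact Or.inr ⟨t, htT, rfl⟩
      by_cases hwt' : w = t
      · exact hwt' ▸ hadj.reachable
      · exact ((hsame w hw t (hTW t htT) hwt' hwt).mono hmono).trans hadj.reachable
  -- hence X is spanned by B ∪ A
  have hXsub : ∀ e, e ∈ X → e ∈ M.closure (B ∪ A) := by
    intro e
    refine Sym2.ind (fun u v he => ?_) e
    have hu : u ∈ W := he.2 u (Sym2.mem_mk_left _ _)
    have hv : v ∈ W := he.2 v (Sym2.mem_mk_right _ _)
    have hreach : (fromEdgeSet (B ∪ A)).Reachable u v :=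
      (key u hu).trans (key v hv).symm
    exact mem_closure_of_reachable hM (Set.union_subset hBE hAE) he.1 hreach
  -- the two counting bounds
  have hBAfin : (B ∪ A).Finite := Set.toFinite _
  have boundX : mrk M X ≤ mrk M (X ∩ Y) + A.ncard := by
    have h1 : mrk M X ≤ mrk M (M.closure (B ∪ A)) := mrk_mono hfin hXsub
    rw [mrk_closure_eq hfin] at h1
    have h2 : mrk M (B ∪ A) ≤ (B ∪ A).ncard := mrk_le_ncard hfin hBAfin
    have h3 : (B ∪ A).ncard ≤ B.ncard + A.ncard := Set.ncard_union_le _ _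
    rw [Basis'_mrk hfin hB]
    omega
  have boundU : mrk M Y + A.ncard ≤ mrk M (M.closure (X ∪ Y)) := by
    have hsub : J ∪ A ⊆ M.closure (X ∪ Y) := by
      refine (Set.union_subset (hJY.trans Set.subset_union_right)
        (hAX.trans Set.subset_union_left)).trans ?_
      exact M.subset_closure (X ∪ Y) (Set.union_subset hXE' hYE)
    have h1 : (J ∪ A).ncard ≤ mrk M (M.closure (X ∪ Y)) :=
      ncard_le_mrk hfin hJAindep hsub
    have h2 : (J ∪ A).ncard = J.ncard + A.ncard :=
      Set.ncard_union_eq hdisjJA (Set.toFinite _) (Set.toFinite _)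
    rw [Basis'_mrk hfin hJ]
    omega
  have hmrkY : mrk M Y = J.ncard := Basis'_mrk hfin hJ
  omega

end Paper
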